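/- Let d ≥ 1 be an integer, γ ∈ (0,1], and let I = [α,β] ⊆ ℝ be a bounded closed interval. Let a = (a_1,…,a_d) : I → ℂ^d be γ-Hölder continuous, and set A := max_{1≤j≤d} sup_{x≠y ∈ I} |a_j(x) − a_j(y)|/|x−y|^γ and B := 2 max_{1≤j≤d} (sup_{x∈I} |a_j(x)|)^{1/j}. Let λ : I → ℂ be a continuous root of P_a on I, i.e. P_{a(x)}(λ(x)) = 0 for all x ∈ I. Then for all x, y ∈ I: |λ(x) − λ(y)| ≤ H₁ |x−y|^{γ/d}, where H₁ := 2d · A^{1/d} · (1 + B + B² + ⋯ + B^{d−1})^{1/d}. -/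

import Mathlib

lemma aux_geom (n : ℕ) : ∑ i ∈ Finset.range n, (1/2:ℝ)^(i+1) = 1 - (1/2:ℝ)^n := by
  induction n with
  | zero => simp
  | succ m ih => rw [Finset.sum_range_succ, ih]; ring

lemma aux_prod_lb (m : Multiset ℝ) (c : ℝ) (hc : 0 ≤ c) (h : ∀ x ∈ m, c ≤ x) :
    c ^ (Multiset.card m) ≤ m.prod := by
  induction m using Multiset.induction with
  | empty => simp
  | cons x m ih =>
    simp only [Multiset.card_cons, Multiset.prod_cons, pow_succ']
    have hx : c ≤ x := h x (Multiset.mem_cons_self x m)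
    have hm : ∀ y ∈ m, c ≤ y := fun y hy => h y (Multiset.mem_cons_of_mem hy)
    exact mul_le_mul hx (ih hm) (pow_nonneg hc _) (hc.trans hx)

lemma aux_rootbd (d : ℕ) (B : ℝ) (hB : 0 ≤ B) (c : Fin d → ℂ) (z : ℂ)
    (hc : ∀ j : Fin d, ‖c j‖ ≤ (B / 2) ^ ((j : ℕ) + 1))
    (hz : z ^ d + ∑ j : Fin d, c j * z ^ (d - 1 - (j : ℕ)) = 0) :
    ‖z‖ ≤ B := by
  by_contra hgt
  push_neg at hgt
  set L := ‖z‖ with hL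
  have hL0 : 0 < L := lt_of_le_of_lt hB hgt
  have hzd : z ^ d = -∑ j : Fin d, c j * z ^ (d - 1 - (j : ℕ)) := by linear_combination hz
  have h1 : L ^ d ≤ ∑ j : Fin d, (B/2) ^ ((j:ℕ)+1) * L ^ (d - 1 - (j:ℕ)) := by
    calc L ^ d = ‖z ^ d‖ := by rw [norm_pow]
      _ = ‖∑ j : Fin d, c j * z ^ (d - 1 - (j : ℕ))‖ := by rw [hzd, norm_neg]
      _ ≤ ∑ j : Fin d, ‖c j * z ^ (d - 1 - (j : ℕ))‖ := norm_sum_le _ _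
      _ ≤ ∑ j : Fin d, (B/2) ^ ((j:ℕ)+1) * L ^ (d - 1 - (j:ℕ)) := by
          refine Finset.sum_le_sum fun j _ => ?_
          rw [norm_mul, norm_pow]
          exact mul_le_mul_of_nonneg_right (hc j) (pow_nonneg (norm_nonneg z) _)
  have h2 : ∀ j : Fin d, (B/2) ^ ((j:ℕ)+1) * L ^ (d - 1 - (j:ℕ)) ≤ L^d * (1/2)^((j:ℕ)+1) := by
    intro j
    have hje : ((j:ℕ)+1) + (d - 1 - (j:ℕ)) = d := by omega
    have hle : (B/2) ^ ((j:ℕ)+1) ≤ (L/2) ^ ((j:ℕ)+1) :=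
      pow_le_pow_left₀ (by linarith) (by linarith) _
    calc (B/2) ^ ((j:ℕ)+1) * L ^ (d - 1 - (j:ℕ)) ≤ (L/2) ^ ((j:ℕ)+1) * L ^ (d - 1 - (j:ℕ)) :=
          mul_le_mul_of_nonneg_right hle (pow_nonneg hL0.le _)
      _ = L^d * (1/2)^((j:ℕ)+1) := by
          have hpow : L^((j:ℕ)+1) * L^(d-1-(j:ℕ)) = L^d := by rw [← pow_add, hje]
          rw [div_pow, div_pow, one_pow, ← hpow]
          ring
  have h3 : L ^ d ≤ L^d * ∑ j : Fin d, (1/2:ℝ)^((j:ℕ)+1) := by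
    rw [Finset.mul_sum]
    exact h1.trans (Finset.sum_le_sum fun j _ => h2 j)
  have h4 : ∑ j : Fin d, (1/2:ℝ)^((j:ℕ)+1) = 1 - (1/2:ℝ)^d := by
    rw [Fin.sum_univ_eq_sum_range (fun j => (1/2:ℝ)^(j+1)), aux_geom]
  have h5 : 0 < (1/2:ℝ)^d := by positivity
  have h6 : 0 < L^d := pow_pos hL0 d
  rw [h4] at h3
  nlinarith

lemma aux_chain (d : ℕ) (hd : 1 ≤ d) (s : Finset ℂ) (hcard : s.card ≤ d)
    (r : ℝ) (hr : 0 ≤ r) (u v : ℝ) (huv : u ≤ v) (f : ℝ → ℂ)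
    (hf : ContinuousOn f (Set.Icc u v)) (hfu : f u ∈ s)
    (hnear : ∀ t ∈ Set.Icc u v, ∃ μ ∈ s, dist (f t) μ ≤ r) :
    dist (f u) (f v) ≤ 2 * d * r := by
  classical
  set step : Finset ℂ → Finset ℂ :=
    fun t => t ∪ s.filter (fun ν => ∃ μ ∈ t, dist ν μ ≤ 2*r) with hstep
  set C : ℕ → Finset ℂ := fun k => step^[k] {f u} with hCdef
  have hCsucc : ∀ k, C (k+1) = step (C k) := fun k => Function.iterate_succ_apply' step k _
  have hsub : ∀ k, C k ⊆ s := by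
    intro k
    induction k with
    | zero => simpa [hCdef] using Finset.singleton_subset_iff.mpr hfu
    | succ k ih =>
      rw [hCsucc k]
      exact Finset.union_subset ih (Finset.filter_subset _ s)
  have hmono : ∀ k, C k ⊆ C (k+1) := by
    intro k; rw [hCsucc k]; exact Finset.subset_union_left
  have hC0 : f u ∈ C 0 := by simp [hCdef]
  have hmono' : ∀ k m, k ≤ m → C k ⊆ C m := by
    intro k m hkm
    induction m with
    | zero => simpa [Nat.le_zero.mp hkm] using Finset.Subset.refl _
    | succ m ih =>
      rcases Nat.lt_succ_iff_lt_or_eq.mp (Nat.lt_succ_of_le hkm) with h | h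
      · exact (ih (Nat.lt_succ_iff.mp h)).trans (hmono m)
      · simp [h]
  have hdist : ∀ k, ∀ μ ∈ C k, dist μ (f u) ≤ 2*r*k := by
    intro k
    induction k with
    | zero => intro μ hμ; simp [hCdef] at hμ; simp [hμ]
    | succ k ih =>
      intro μ hμ
      rw [hCsucc k] at hμ
      rcases Finset.mem_union.mp hμ with h | h
      · refine (ih μ h).trans ?_
        have : (k:ℝ) ≤ (k:ℝ)+1 := by linarith
        push_cast
        nlinarith
      · obtain ⟨-, μ', hμ', hd'⟩ := Finset.mem_filter.mp h
        calc dist μ (f u) ≤ dist μ μ' + dist μ' (f u) := dist_triangle _ _ _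
          _ ≤ 2*r + 2*r*k := add_le_add hd' (ih μ' hμ')
          _ = 2*r*((k:ℝ)+1) := by ring
          _ = 2*r*((k+1 : ℕ):ℝ) := by push_cast; ring
  -- stabilization : C d = C (d-1)
  have hstab : C d = C (d-1) := by
    by_cases hex : ∃ k < d-1, C k = C (k+1)
    · obtain ⟨k, hk, he⟩ := hex
      have hconst : ∀ m, C (k + m) = C k := by
        intro m
        induction m with
        | zero => rfl
        | succ m ih =>
          have : C (k + m + 1) = step (C (k+m)) := hCsucc _
          rw [show k + (m+1) = k + m + 1 by ring, this, ih, ← hCsucc k, ← he]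
      have h1 : C d = C k := by
        have := hconst (d - k); rwa [show k + (d - k) = d by omega] at this
      have h2 : C (d-1) = C k := by
        have := hconst (d - 1 - k); rwa [show k + (d - 1 - k) = d - 1 by omega] at this
      rw [h1, h2]
    · push_neg at hex
      have hcard2 : ∀ k ≤ d-1, k + 1 ≤ (C k).card := by
        intro k
        induction k with
        | zero => intro _; simp [hCdef]
        | succ k ih =>
          intro hk
          have hk' : k < d - 1 := by omega
          have hss : C k ⊂ C (k+1) := (Finset.ssubset_iff_of_subset (hmono k)).mpr (by
            rcases Finset.exists_of_ssubset (lt_of_le_of_ne (hmono k) (hex k hk')) with ⟨x, hx1, hx2⟩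
            exact ⟨x, hx1, hx2⟩)
          have := Finset.card_lt_card hss
          have := ih (by omega)
          omega
      have : d ≤ (C (d-1)).card := by
        have := hcard2 (d-1) le_rfl; omega
      have hCs : C (d-1) = s := Finset.eq_of_subset_of_card_le (hsub _) (hcard.trans this)
      have : C d = step s := by
        rw [show d = (d-1)+1 by omega, hCsucc, hCs]
      rw [this, hCs, hstep]
      exact Finset.union_eq_left.mpr (Finset.filter_subset _ s)
  set Cf : Finset ℂ := C (d-1) with hCf
  have hclosed : ∀ ν ∈ s, ∀ μ ∈ Cf, dist ν μ ≤ 2*r → ν ∈ Cf := by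
    intro ν hν μ hμ hdν
    have : ν ∈ step Cf := Finset.mem_union_right _ (Finset.mem_filter.mpr ⟨hν, μ, hμ, hdν⟩)
    rwa [← hCsucc, show (d-1)+1 = d by omega, hstab] at this
  set G : Set ℂ := ⋃ μ ∈ (Cf : Set ℂ), Metric.closedBall μ r with hG
  set H : Set ℂ := ⋃ μ ∈ ((s \ Cf : Finset ℂ) : Set ℂ), Metric.closedBall μ r with hH
  have hGc : IsClosed G := Cf.finite_toSet.isClosed_biUnion (fun i _ => Metric.isClosed_closedBall)
  have hHc : IsClosed H := (s \ Cf).finite_toSet.isClosed_biUnion (fun i _ => Metric.isClosed_closedBall)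
  have hdisj : ∀ z, z ∈ G → z ∈ H → False := by
    intro z hzG hzH
    simp only [hG, hH, Set.mem_iUnion, Metric.mem_closedBall] at hzG hzH
    obtain ⟨μ, hμ, hzμ⟩ := hzG
    obtain ⟨ν, hν, hzν⟩ := hzH
    rcases Finset.mem_sdiff.mp (by exact_mod_cast hν) with ⟨hνs, hνn⟩
    exact hνn (hclosed ν hνs μ (by exact_mod_cast hμ)
      ((dist_triangle ν z μ).trans (by rw [dist_comm ν z]; linarith)))
  set F₁ : Set ℝ := Set.Icc u v ∩ f ⁻¹' G with hF1
  set F₂ : Set ℝ := Set.Icc u v ∩ f ⁻¹' H with hF2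
  have hF1c : IsClosed F₁ := hf.preimage_isClosed_of_isClosed isClosed_Icc hGc
  have hF2c : IsClosed F₂ := hf.preimage_isClosed_of_isClosed isClosed_Icc hHc
  have hcover : Set.Icc u v ⊆ F₁ ∪ F₂ := by
    intro t ht
    obtain ⟨μ, hμ, hdμ⟩ := hnear t ht
    by_cases hc : μ ∈ Cf
    · exact Or.inl ⟨ht, Set.mem_biUnion (by exact_mod_cast hc) (Metric.mem_closedBall.mpr hdμ)⟩
    · refine Or.inr ⟨ht, Set.mem_biUnion ?_ (Metric.mem_closedBall.mpr hdμ)⟩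
      exact_mod_cast Finset.mem_sdiff.mpr ⟨hμ, hc⟩
  have hfuCf : f u ∈ Cf := hmono' 0 (d-1) (Nat.zero_le _) hC0
  have huF1 : u ∈ F₁ := ⟨Set.left_mem_Icc.mpr huv,
    Set.mem_biUnion (by exact_mod_cast hfuCf) (by simp [hr])⟩
  have hvG : f v ∈ G := by
    by_contra hvn
    have hvF2 : (Set.Icc u v ∩ F₂).Nonempty := by
      have hv : v ∈ Set.Icc u v := Set.right_mem_Icc.mpr huv
      rcases hcover hv with h | h
      · exact absurd h.2 hvn
      · exact ⟨v, hv, h⟩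
    have := isPreconnected_closed_iff.mp isPreconnected_Icc F₁ F₂ hF1c hF2c hcover
      ⟨u, Set.left_mem_Icc.mpr huv, huF1⟩ hvF2
    obtain ⟨t, -, ht1, ht2⟩ := this
    exact hdisj (f t) ht1.2 ht2.2
  simp only [hG, Set.mem_iUnion, Metric.mem_closedBall] at hvG
  obtain ⟨μ, hμ, hvμ⟩ := hvG
  have h1 : dist μ (f u) ≤ 2*r*((d-1 : ℕ):ℝ) := hdist (d-1) μ (by exact_mod_cast hμ)
  have h2 : ((d-1:ℕ):ℝ) = (d:ℝ) - 1 := by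
    push_cast [Nat.cast_sub hd]; ring
  calc dist (f u) (f v) ≤ dist (f v) μ + dist μ (f u) := by
        rw [dist_comm (f u) (f v)]; exact dist_triangle _ _ _
    _ ≤ r + 2*r*((d:ℝ)-1) := by rw [h2] at h1; exact add_le_add hvμ h1
    _ ≤ 2*d*r := by
        have hd1 : (1:ℝ) ≤ (d:ℝ) := by exact_mod_cast hd
        nlinarith

lemma aux_main (d : ℕ) (hd : 1 ≤ d) (γ : ℝ) (hγ0 : 0 < γ)
    (α β : ℝ) (a : ℝ → Fin d → ℂ) (A B : ℝ) (hA : 0 ≤ A) (hB : 0 ≤ B)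
    (hHold : ∀ j : Fin d, ∀ x ∈ Set.Icc α β, ∀ y ∈ Set.Icc α β,
      ‖a x j - a y j‖ ≤ A * |x - y| ^ γ)
    (hBound : ∀ j : Fin d, ∀ x ∈ Set.Icc α β,
      ‖a x j‖ ≤ (B / 2) ^ ((j : ℕ) + 1))
    (lam : ℝ → ℂ) (hcont : ContinuousOn lam (Set.Icc α β))
    (hroot : ∀ x ∈ Set.Icc α β,
      lam x ^ d + ∑ j : Fin d, a x j * lam x ^ (d - 1 - (j : ℕ)) = 0)
    (x : ℝ) (hx : x ∈ Set.Icc α β) (y : ℝ) (hy : y ∈ Set.Icc α β) (hxy : x ≤ y) :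
    ‖lam x - lam y‖ ≤
      2 * d * A ^ ((d : ℝ)⁻¹) * (∑ i : Fin d, B ^ (i : ℕ)) ^ ((d : ℝ)⁻¹) *
        |x - y| ^ (γ / d) := by
  classical
  have hd0 : (d:ℝ) ≠ 0 := Nat.cast_ne_zero.mpr (by omega)
  set S : ℝ := ∑ i : Fin d, B ^ (i : ℕ) with hS
  have hS0 : 0 ≤ S := Finset.sum_nonneg fun i _ => pow_nonneg hB _
  set r : ℝ := (A*S) ^ ((d:ℝ)⁻¹) * |x - y| ^ (γ / (d:ℝ)) with hrdef
  have hr0 : 0 ≤ r :=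
    mul_nonneg (Real.rpow_nonneg (mul_nonneg hA hS0) _) (Real.rpow_nonneg (abs_nonneg _) _)
  have hrd : r ^ d = A * S * |x - y| ^ γ := by
    rw [hrdef, mul_pow, ← Real.rpow_natCast ((A*S) ^ ((d:ℝ)⁻¹)) d,
      ← Real.rpow_natCast (|x - y| ^ (γ / (d:ℝ))) d,
      ← Real.rpow_mul (mul_nonneg hA hS0), ← Real.rpow_mul (abs_nonneg _),
      inv_mul_cancel₀ hd0, div_mul_cancel₀ _ hd0, Real.rpow_one]
  have hIcc : Set.Icc x y ⊆ Set.Icc α β := Set.Icc_subset_Icc hx.1 hy.2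
  have hlamB : ∀ t ∈ Set.Icc α β, ‖lam t‖ ≤ B := fun t ht =>
    aux_rootbd d B hB (a t) (lam t) (fun j => hBound j t ht) (hroot t ht)
  set p : Polynomial ℂ := Polynomial.X ^ d
      + ∑ j : Fin d, Polynomial.C (a x j) * Polynomial.X ^ (d - 1 - (j:ℕ)) with hp
  have hqdeg : (∑ j : Fin d, Polynomial.C (a x j) * Polynomial.X ^ (d - 1 - (j:ℕ))).degree
      < (d : WithBot ℕ) := by
    refine lt_of_le_of_lt (Polynomial.degree_sum_le _ _) ?_
    refine (Finset.sup_lt_iff (by exact WithBot.bot_lt_coe d)).mpr ?_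
    intro j _
    refine lt_of_le_of_lt (Polynomial.degree_C_mul_X_pow_le _ _) ?_
    exact_mod_cast (show d - 1 - (j:ℕ) < d by omega)
  have hpm : p.Monic := by
    rw [hp]
    exact Polynomial.monic_X_pow_add hqdeg
  have hdegX : (Polynomial.X ^ d : Polynomial ℂ).degree = (d : WithBot ℕ) :=
    Polynomial.degree_X_pow d
  have hpd : p.natDegree = d := by
    rw [hp, Polynomial.natDegree_add_eq_left_of_degree_lt (by rw [hdegX]; exact hqdeg),
      Polynomial.natDegree_X_pow]
  have hrc : Multiset.card p.roots = d := by
    rw [← hpd]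
    exact (Polynomial.splits_iff_card_roots).mp (IsAlgClosed.splits p)
  have heval : ∀ z : ℂ, p.eval z = z ^ d + ∑ j : Fin d, a x j * z ^ (d - 1 - (j:ℕ)) := by
    intro z
    simp [hp, Polynomial.eval_finset_sum]
  have hprod : ∀ z : ℂ,
      ‖p.eval z‖ = (p.roots.map (fun μ => ‖z - μ‖)).prod := by
    intro z
    rw [(IsAlgClosed.splits p).eval_eq_prod_roots_of_monic hpm]
    have := map_multiset_prod (normHom : ℂ →*₀ ℝ) (p.roots.map (z - ·))
    simpa [Multiset.map_map, Function.comp] using this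
  have hevb : ∀ t ∈ Set.Icc x y, ‖p.eval (lam t)‖ ≤ r ^ d := by
    intro t ht
    have ht' := hIcc ht
    have hkey : p.eval (lam t) = ∑ j : Fin d, (a x j - a t j) * lam t ^ (d - 1 - (j:ℕ)) := by
      rw [heval]
      simp only [sub_mul, Finset.sum_sub_distrib]
      linear_combination hroot t ht'
    rw [hkey, hrd]
    have hxt : |x - t| ≤ |x - y| := by
      rcases ht with ⟨h1, h2⟩
      rw [abs_of_nonpos (by linarith), abs_of_nonpos (by linarith)]
      linarith
    calc ‖∑ j : Fin d, (a x j - a t j) * lam t ^ (d-1-(j:ℕ))‖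
        ≤ ∑ j : Fin d, ‖(a x j - a t j) * lam t ^ (d-1-(j:ℕ))‖ :=
          norm_sum_le _ _
      _ ≤ ∑ j : Fin d, (A * |x - y| ^ γ) * B ^ (d-1-(j:ℕ)) := by
          refine Finset.sum_le_sum fun j _ => ?_
          rw [norm_mul, norm_pow]
          refine mul_le_mul ?_ ?_ (pow_nonneg (norm_nonneg _) _)
            (mul_nonneg hA (Real.rpow_nonneg (abs_nonneg _) _))
          · exact (hHold j x hx t ht').trans
              (mul_le_mul_of_nonneg_left (Real.rpow_le_rpow (abs_nonneg _) hxt hγ0.le) hA)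
          · exact pow_le_pow_left₀ (norm_nonneg _) (hlamB t ht') _
      _ = A * S * |x - y| ^ γ := by
          rw [← Finset.mul_sum]
          have hrev : ∑ j : Fin d, B ^ (d-1-(j:ℕ)) = S := by
            rw [hS]
            exact Fintype.sum_bijective Fin.rev Fin.rev_bijective _ _
              (fun j => by rw [Fin.val_rev]; congr 1; omega)
          rw [hrev]
          ring
  have hpne : p.roots ≠ 0 := by
    intro h
    rw [h] at hrc
    simp at hrc
    omega
  have hne : p.roots.toFinset.Nonempty := by
    simpa using Multiset.toFinset_nonempty.mpr hpne
  have hnear : ∀ t ∈ Set.Icc x y, ∃ μ ∈ p.roots.toFinset, dist (lam t) μ ≤ r := by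
    intro t ht
    obtain ⟨μ₀, hμ₀, hmin⟩ :=
      p.roots.toFinset.exists_min_image (fun μ => ‖lam t - μ‖) hne
    refine ⟨μ₀, hμ₀, ?_⟩
    rw [Complex.dist_eq]
    have hlb : ‖lam t - μ₀‖ ^ d ≤ r ^ d := by
      have h1 := aux_prod_lb (p.roots.map (fun μ => ‖lam t - μ‖))
        (‖lam t - μ₀‖) (norm_nonneg _) (by
          intro w hw
          obtain ⟨μ, hμ, rfl⟩ := Multiset.mem_map.mp hw
          exact hmin μ (Multiset.mem_toFinset.mpr hμ))
      rw [Multiset.card_map, hrc] at h1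
      exact h1.trans (by rw [← hprod]; exact hevb t ht)
    exact (pow_le_pow_iff_left₀ (norm_nonneg _) hr0 (by omega)).mp hlb
  have hfu : lam x ∈ p.roots.toFinset := by
    rw [Multiset.mem_toFinset]
    refine Polynomial.mem_roots'.mpr ⟨hpm.ne_zero, ?_⟩
    rw [Polynomial.IsRoot, heval]
    exact hroot x hx
  have hcardle : p.roots.toFinset.card ≤ d :=
    (Multiset.toFinset_card_le _).trans (le_of_eq hrc)
  have hchain := aux_chain d hd p.roots.toFinset hcardle r hr0 x y hxy lam
    (hcont.mono hIcc) hfu hnear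
  calc ‖lam x - lam y‖ = dist (lam x) (lam y) := (Complex.dist_eq _ _).symm
    _ ≤ 2*d*r := hchain
    _ = 2 * d * A ^ ((d : ℝ)⁻¹) * S ^ ((d : ℝ)⁻¹) * |x - y| ^ (γ / d) := by
        rw [hrdef, Real.mul_rpow hA hS0]
        ring


theorem stmt16 (d : ℕ) (hd : 1 ≤ d) (γ : ℝ) (hγ0 : 0 < γ) (hγ1 : γ ≤ 1)
    (α β : ℝ) (hαβ : α ≤ β) (a : ℝ → Fin d → ℂ) (A B : ℝ) (hA : 0 ≤ A) (hB : 0 ≤ B)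
    (hHold : ∀ j : Fin d, ∀ x ∈ Set.Icc α β, ∀ y ∈ Set.Icc α β,
      ‖a x j - a y j‖ ≤ A * |x - y| ^ γ)
    (hBound : ∀ j : Fin d, ∀ x ∈ Set.Icc α β,
      ‖a x j‖ ≤ (B / 2) ^ ((j : ℕ) + 1))
    (lam : ℝ → ℂ) (hcont : ContinuousOn lam (Set.Icc α β))
    (hroot : ∀ x ∈ Set.Icc α β,
      lam x ^ d + ∑ j : Fin d, a x j * lam x ^ (d - 1 - (j : ℕ)) = 0) :
    ∀ x ∈ Set.Icc α β, ∀ y ∈ Set.Icc α β,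
      ‖lam x - lam y‖ ≤
        2 * d * A ^ ((d : ℝ)⁻¹) * (∑ i : Fin d, B ^ (i : ℕ)) ^ ((d : ℝ)⁻¹) *
          |x - y| ^ (γ / d) := by
  intro x hx y hy
  rcases le_total x y with h | h
  · exact aux_main d hd γ hγ0 α β a A B hA hB hHold hBound lam hcont hroot x hx y hy h
  · rw [norm_sub_rev, abs_sub_comm]
    exact aux_main d hd γ hγ0 α β a A B hA hB hHold hBound lam hcont hroot y hy x hx h
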